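/- Let f be a multiplicative function, p a prime, (κ_α)_{α≥0} a sequence of complex numbers with κ_0 = 0, and (a_α)_{α≥1} a sequence of positive integers with 1 ≤ a_α ≤ α. Then the function h(n) = Σ_{k=1}^{n} f(gcd(k,n)) − κ_{v_p(n)} · Σ_{1≤k≤n, v_p(k) = v_p(n) − a_{v_p(n)}} f(gcd(k,n)) is multiplicative. -/

import Mathlib

open Finset

lemma crt_sum (m n : ℕ) (hm : 0 < m) (hn : 0 < n) (hmn : Nat.Coprime m n)
    (F G : ℕ → ℂ)
    (hF : ∀ j k : ℕ, 1 ≤ j → 1 ≤ k → j ≡ k [MOD m] → F j = F k)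
    (hG : ∀ j k : ℕ, 1 ≤ j → 1 ≤ k → j ≡ k [MOD n] → G j = G k) :
    ∑ k ∈ Finset.Icc 1 (m * n), F k * G k
      = (∑ i ∈ Finset.Icc 1 m, F i) * (∑ j ∈ Finset.Icc 1 n, G j) := by
  rw [Finset.sum_mul_sum, ← Finset.sum_product']
  apply Finset.sum_bij (i := fun k _ => ((k - 1) % m + 1, (k - 1) % n + 1))
  · intro k hk
    simp only [Finset.mem_product, Finset.mem_Icc]
    constructor
    · exact ⟨Nat.le_add_left 1 _, Nat.mod_lt _ hm⟩
    · exact ⟨Nat.le_add_left 1 _, Nat.mod_lt _ hn⟩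
  · intro k1 hk1 k2 hk2 heq
    simp only [Finset.mem_Icc] at hk1 hk2
    simp only [Prod.mk.injEq, Nat.add_right_cancel_iff] at heq
    have h1 : k1 - 1 ≡ k2 - 1 [MOD m * n] :=
      (Nat.modEq_and_modEq_iff_modEq_mul hmn).mp ⟨heq.1, heq.2⟩
    have : (k1 - 1) % (m * n) = (k2 - 1) % (m * n) := h1
    rw [Nat.mod_eq_of_lt (by omega), Nat.mod_eq_of_lt (by omega)] at this
    omega
  · intro b hb
    simp only [Finset.mem_product, Finset.mem_Icc] at hb
    obtain ⟨⟨hb1, hb2⟩, ⟨hb3, hb4⟩⟩ := hb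
    obtain ⟨c, hc1, hc2⟩ := Nat.chineseRemainder hmn (b.1 - 1) (b.2 - 1)
    refine ⟨c % (m * n) + 1, ?_, ?_⟩
    · simp only [Finset.mem_Icc]
      exact ⟨Nat.le_add_left 1 _, Nat.mod_lt _ (Nat.mul_pos hm hn)⟩
    · have hcm : c % (m * n) ≡ c [MOD m] :=
        ((Nat.mod_modEq c (m*n)).of_dvd ⟨n, rfl⟩)
      have hcn : c % (m * n) ≡ c [MOD n] :=
        ((Nat.mod_modEq c (m*n)).of_dvd ⟨m, mul_comm m n⟩)
      have e1 : (c % (m * n) + 1 - 1) % m = b.1 - 1 := by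
        have : c % (m * n) % m = (b.1 - 1) % m := hcm.trans hc1
        simpa [Nat.mod_eq_of_lt (show b.1 - 1 < m by omega)] using this
      have e2 : (c % (m * n) + 1 - 1) % n = b.2 - 1 := by
        have : c % (m * n) % n = (b.2 - 1) % n := hcn.trans hc2
        simpa [Nat.mod_eq_of_lt (show b.2 - 1 < n by omega)] using this
      have f1 : (c % (m * n) + 1 - 1) % m + 1 = b.1 := by rw [e1]; omega
      have f2 : (c % (m * n) + 1 - 1) % n + 1 = b.2 := by rw [e2]; omega
      rw [Prod.ext_iff]
      exact ⟨f1, f2⟩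
  · intro k hk
    simp only [Finset.mem_Icc] at hk
    have hkm : k ≡ (k - 1) % m + 1 [MOD m] := by
      have : (k - 1) ≡ (k - 1) % m [MOD m] := (Nat.mod_modEq _ _).symm
      have h2 := this.add_right 1
      rwa [Nat.sub_add_cancel hk.1] at h2
    have hkn : k ≡ (k - 1) % n + 1 [MOD n] := by
      have : (k - 1) ≡ (k - 1) % n [MOD n] := (Nat.mod_modEq _ _).symm
      have h2 := this.add_right 1
      rwa [Nat.sub_add_cancel hk.1] at h2
    rw [hF k _ hk.1 (Nat.le_add_left 1 _) hkm, hG k _ hk.1 (Nat.le_add_left 1 _) hkn]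

lemma val_eq_iff {p : ℕ} (hp : p.Prime) (k β : ℕ) (hk : k ≠ 0) :
    padicValNat p k = β ↔ p ^ β ∣ k ∧ ¬ p ^ (β + 1) ∣ k := by
  rw [hp.pow_dvd_iff_le_factorization hk, hp.pow_dvd_iff_le_factorization hk,
      Nat.factorization_def k hp]
  omega


theorem h1_multiplicative (f : ℕ → ℂ) (hf1 : f 1 = 1)
    (hf : ∀ m n : ℕ, Nat.Coprime m n → f (m * n) = f m * f n)
    (p : ℕ) (hp : p.Prime)
    (κ : ℕ → ℂ) (hκ0 : κ 0 = 0)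
    (a : ℕ → ℕ) (ha : ∀ α : ℕ, 1 ≤ α → 1 ≤ a α ∧ a α ≤ α)
    (h : ℕ → ℂ)
    (hdef : ∀ n : ℕ, h n =
      (∑ k ∈ Finset.Icc 1 n, f (Nat.gcd k n)) -
        κ (padicValNat p n) *
          ∑ k ∈ (Finset.Icc 1 n).filter
              (fun k => padicValNat p k = padicValNat p n - a (padicValNat p n)),
            f (Nat.gcd k n)) :
    h 1 = 1 ∧ ∀ m n : ℕ, 0 < m → 0 < n → Nat.Coprime m n →
      h (m * n) = h m * h n := by
  haveI := Fact.mk hp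
  have hgcdf : ∀ m n k : ℕ, Nat.Coprime m n →
      f (Nat.gcd k (m * n)) = f (Nat.gcd k m) * f (Nat.gcd k n) := by
    intro m n k hmn
    rw [Nat.Coprime.gcd_mul k hmn]
    exact hf _ _ (Nat.Coprime.coprime_dvd_left (Nat.gcd_dvd_right k m)
      (hmn.coprime_dvd_right (Nat.gcd_dvd_right k n)))
  have hxi : ∀ m n : ℕ, 0 < m → 0 < n → Nat.Coprime m n →
      (∑ k ∈ Finset.Icc 1 (m * n), f (Nat.gcd k (m * n))) =
        (∑ k ∈ Finset.Icc 1 m, f (Nat.gcd k m)) *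
          (∑ k ∈ Finset.Icc 1 n, f (Nat.gcd k n)) := by
    intro m n hm hn hmn
    rw [← crt_sum m n hm hn hmn (fun k => f (Nat.gcd k m)) (fun k => f (Nat.gcd k n))
      (fun j k _ _ hjk => by simp only [Nat.ModEq.gcd_eq hjk])
      (fun j k _ _ hjk => by simp only [Nat.ModEq.gcd_eq hjk])]
    exact Finset.sum_congr rfl fun k _ => hgcdf m n k hmn
  have key : ∀ m n : ℕ, 0 < m → 0 < n → Nat.Coprime m n → ¬ p ∣ n →
      h (m * n) = h m * h n := by
    intro m n hm hn hmn hpn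
    have hvn : padicValNat p n = 0 := padicValNat.eq_zero_of_not_dvd hpn
    have hvmn : padicValNat p (m * n) = padicValNat p m := by
      rw [padicValNat.mul (by omega) (by omega), hvn, add_zero]
    rw [hdef (m * n), hdef m, hdef n, hvn, hvmn, hκ0]
    by_cases hα : padicValNat p m = 0
    · rw [hα, hκ0]
      simp only [zero_mul, sub_zero]
      exact hxi m n hm hn hmn
    · set α := padicValNat p m with hαdef
      set β := α - a α with hβdef
      have hβ : β + 1 ≤ α := by
        have := ha α (by omega); omega
      have hpβm : p ^ (β + 1) ∣ m :=
        dvd_trans (pow_dvd_pow p hβ) pow_padicValNat_dvd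
      have hS : ∑ k ∈ (Finset.Icc 1 (m * n)).filter (fun k => padicValNat p k = β),
            f (Nat.gcd k (m * n))
          = (∑ k ∈ (Finset.Icc 1 m).filter (fun k => padicValNat p k = β),
              f (Nat.gcd k m)) * (∑ k ∈ Finset.Icc 1 n, f (Nat.gcd k n)) := by
        rw [Finset.sum_filter, Finset.sum_filter]
        rw [← crt_sum m n hm hn hmn
          (fun k => if padicValNat p k = β then f (Nat.gcd k m) else 0)
          (fun k => f (Nat.gcd k n)) ?_
          (fun j k _ _ hjk => by simp only [Nat.ModEq.gcd_eq hjk])]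
        · refine Finset.sum_congr rfl fun k _ => ?_
          by_cases hc : padicValNat p k = β <;>
            simp [hc, hgcdf m n k hmn]
        · intro j k hj hk hjk
          have hmod : j ≡ k [MOD p ^ (β + 1)] := hjk.of_dvd hpβm
          have hiff : padicValNat p j = β ↔ padicValNat p k = β := by
            rw [val_eq_iff hp j β (by omega), val_eq_iff hp k β (by omega),
              hmod.dvd_iff (pow_dvd_pow p (Nat.le_succ β)), hmod.dvd_iff dvd_rfl]
          simp only [Nat.ModEq.gcd_eq hjk]
          exact if_congr hiff rfl rfl
      rw [hxi m n hm hn hmn, hS]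
      ring
  constructor
  · rw [hdef 1]
    simp [padicValNat.one, hκ0, hf1]
  · intro m n hm hn hmn
    by_cases hpn : p ∣ n
    · have hpm : ¬ p ∣ m := fun hpm =>
        hp.not_dvd_one (hmn ▸ Nat.dvd_gcd hpm hpn)
      rw [mul_comm]
      rw [key n m hn hm hmn.symm hpm, mul_comm]
    · exact key m n hm hn hmn hpn
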